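/- Let 𝒞 ⊆ ℝ^m be a closed set and let (hₙ) be a sequence of points of 𝒞 such that dist(hₙ, frontier 𝒞) → ∞ as n → ∞. Then ⋃ₙ (−hₙ + 𝒞) = ℝ^m; equivalently, for every s ∈ ℝ^m there exists n with hₙ + s ∈ 𝒞. -/
import Mathlib


open Metric Filter Topology

open Set.Notation in
lemma aux_add_mem_of_norm_lt_infDist {E : Type*} [NormedAddCommGroup E] [NormedSpace ℝ E]
    {C : Set E} (hCclosed : IsClosed C) {x s : E} (hx : x ∈ C)
    (hs : ‖s‖ < infDist x (frontier C)) : x + s ∈ C := by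
  set K := segment ℝ x (x + s) with hK
  have hsub : K ⊆ closedBall x ‖s‖ := by
    apply (convex_closedBall x ‖s‖).segment_subset
    · simp [mem_closedBall, dist_self, norm_nonneg]
    · simp [mem_closedBall, dist_comm, dist_eq_norm]
  have hdisj : ∀ y ∈ K, y ∉ frontier C := by
    intro y hy hyf
    have h1 : infDist x (frontier C) ≤ dist x y := infDist_le_dist_of_mem hyf
    have h2 : dist x y ≤ ‖s‖ := by
      have := hsub hy; rw [mem_closedBall, dist_comm] at this; exact this
    linarith
  have hxint : x ∈ interior C := by
    have hxf : x ∉ frontier C := by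
      intro hxf
      have : infDist x (frontier C) ≤ 0 := by
        simpa using infDist_le_dist_of_mem (x := x) hxf
      have := norm_nonneg s; linarith
    have : x ∈ closure C := subset_closure hx
    rw [closure_eq_interior_union_frontier, Set.mem_union] at this
    tauto
  have hKpre : IsPreconnected K := (convex_segment x (x + s)).isPreconnected
  have hclopen : IsClopen (K ↓∩ interior C) := by
    apply isClopen_preimage_val isOpen_interior
    rw [Set.disjoint_left]
    intro y hy hyK
    exact hdisj y hyK (frontier_interior_subset hy)
  haveI : PreconnectedSpace K := Subtype.preconnectedSpace hKpre
  have hne : (K ↓∩ interior C).Nonempty :=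
    ⟨⟨x, left_mem_segment ℝ x (x + s)⟩, hxint⟩
  have huniv := hclopen.eq_univ hne
  have hmemK : (⟨x + s, right_mem_segment ℝ x (x + s)⟩ : K) ∈ (K ↓∩ interior C) := by
    rw [huniv]; trivial
  exact interior_subset hmemK

/-- If `𝒞 ⊆ ℝ^m` is closed and `hₙ ∈ 𝒞` with `dist(hₙ, frontier 𝒞) → ∞`, then
`⋃ₙ (−hₙ + 𝒞) = ℝ^m`; equivalently every `s` satisfies `hₙ + s ∈ 𝒞` for some `n`. -/
theorem iUnion_neg_add_eq_univ_of_infDist_frontier_tendsto_atTop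
    {m : ℕ} (C : Set (EuclideanSpace ℝ (Fin m))) (hCclosed : IsClosed C)
    (h : ℕ → EuclideanSpace ℝ (Fin m)) (hmem : ∀ n, h n ∈ C)
    (hdist : Tendsto (fun n => infDist (h n) (frontier C)) atTop atTop) :
    (⋃ n, (fun x => x - h n) '' C) = Set.univ ∧
    ∀ s : EuclideanSpace ℝ (Fin m), ∃ n, h n + s ∈ C := by
  have key : ∀ s : EuclideanSpace ℝ (Fin m), ∃ n, h n + s ∈ C := by
    intro s
    obtain ⟨n, hn⟩ := (hdist.eventually_gt_atTop ‖s‖).exists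
    exact ⟨n, aux_add_mem_of_norm_lt_infDist hCclosed (hmem n) hn⟩
  refine ⟨?_, key⟩
  ext x
  simp only [Set.mem_iUnion, Set.mem_image, Set.mem_univ, iff_true]
  obtain ⟨n, hn⟩ := key x
  exact ⟨n, h n + x, hn, by abel⟩
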